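/- arXiv:1712.04422 — 6 statements merged into one kernel-verified Lean document; each statement's English description precedes it below -/
import Mathlib

section
/- Let f : ℝ² → Matrix (Fin n) (Fin n) ℝ and f₀ : ℝ² → (Fin n → ℝ) be C¹, and suppose H : ℝ²ⁿ → ℝⁿ is C¹ and satisfies Σⱼ fᵢⱼ(aᵢ,bᵢ) Hⱼ(a,b) = f₀ᵢ(aᵢ,bᵢ) for all i and all (a,b). Fix k and a point (a,b) where the (n−1)×n matrix (fᵢⱼ(aᵢ,bᵢ))_{i≠k, j} has rank n−1. Then the vectors (∂Hⱼ/∂aₖ)ⱼ and (∂Hⱼ/∂bₖ)ⱼ at (a,b) are linearly dependent, and hence ∂Hᵢ/∂aₖ ∂Hⱼ/∂bₖ − ∂Hⱼ/∂aₖ ∂Hᵢ/∂bₖ = 0 for all i,j. -/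
/-- Partial derivative with respect to `a_k`. -/
noncomputable def pa {n : ℕ} (f : (Fin n → ℝ) × (Fin n → ℝ) → ℝ) (k : Fin n)
    (x : (Fin n → ℝ) × (Fin n → ℝ)) : ℝ :=
  fderiv ℝ f x (Pi.single k 1, 0)

/-- Partial derivative with respect to `b_k`. -/
noncomputable def pb {n : ℕ} (f : (Fin n → ℝ) × (Fin n → ℝ) → ℝ) (k : Fin n)
    (x : (Fin n → ℝ) × (Fin n → ℝ)) : ℝ :=
  fderiv ℝ f x (0, Pi.single k 1)


theorem stmt9 {n : ℕ} (f : ℝ × ℝ → Fin n → Fin n → ℝ) (f₀ : ℝ × ℝ → Fin n → ℝ)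
    (hf : ContDiff ℝ 1 f) (hf₀ : ContDiff ℝ 1 f₀)
    (H : (Fin n → ℝ) × (Fin n → ℝ) → (Fin n → ℝ)) (hH : ContDiff ℝ 1 H)
    (heq : ∀ i (x : (Fin n → ℝ) × (Fin n → ℝ)),
      ∑ j, f (x.1 i, x.2 i) i j * H x j = f₀ (x.1 i, x.2 i) i)
    (k : Fin n) (x : (Fin n → ℝ) × (Fin n → ℝ))
    (hrank : (Matrix.of fun (i : {i : Fin n // i ≠ k}) (j : Fin n) =>
        f (x.1 i.1, x.2 i.1) i.1 j).rank = n - 1) :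
    (∃ α β : ℝ, ¬(α = 0 ∧ β = 0) ∧ ∀ j : Fin n,
      α * pa (fun y => H y j) k x + β * pb (fun y => H y j) k x = 0) ∧
    ∀ i j : Fin n,
      pa (fun y => H y i) k x * pb (fun y => H y j) k x
        - pa (fun y => H y j) k x * pb (fun y => H y i) k x = 0 := by
  classical
  have hHd : ∀ j, Differentiable ℝ (fun y : (Fin n → ℝ) × (Fin n → ℝ) => H y j) := fun j =>
    (contDiff_pi.mp hH j).differentiable one_ne_zero
  set u : Fin n → ℝ := fun j => pa (fun y => H y j) k x with hu
  set v : Fin n → ℝ := fun j => pb (fun y => H y j) k x with hv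
  -- Key: differentiating the i-th equation in a direction vanishing at coordinate i
  have key : ∀ (i : Fin n), ∀ (w : (Fin n → ℝ) × (Fin n → ℝ)),
      w.1 i = 0 → w.2 i = 0 →
      ∑ j, f (x.1 i, x.2 i) i j * fderiv ℝ (fun y => H y j) x w = 0 := by
    intro i w hw1 hw2
    set π : ((Fin n → ℝ) × (Fin n → ℝ)) →L[ℝ] ℝ × ℝ :=
      ((ContinuousLinearMap.proj i).comp
          (ContinuousLinearMap.fst ℝ (Fin n → ℝ) (Fin n → ℝ))).prod
        ((ContinuousLinearMap.proj i).comp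
          (ContinuousLinearMap.snd ℝ (Fin n → ℝ) (Fin n → ℝ))) with hπ
    have hπx : ∀ y : (Fin n → ℝ) × (Fin n → ℝ), π y = (y.1 i, y.2 i) := fun y => rfl
    have hfd : ∀ j, Differentiable ℝ (fun p : ℝ × ℝ => f p i j) := fun j =>
      (contDiff_pi.mp (contDiff_pi.mp hf i) j).differentiable one_ne_zero
    have hf0d : Differentiable ℝ (fun p : ℝ × ℝ => f₀ p i) :=
      (contDiff_pi.mp hf₀ i).differentiable one_ne_zero
    have hL : HasFDerivAt (fun y => ∑ j, f (π y) i j * H y j)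
        (∑ j, (f (π x) i j • (fderiv ℝ (fun y => H y j) x)
          + H x j • ((fderiv ℝ (fun p => f p i j) (π x)).comp π))) x := by
      apply HasFDerivAt.fun_sum
      intro j _
      exact (((hfd j (π x)).hasFDerivAt.comp x π.hasFDerivAt).mul ((hHd j x).hasFDerivAt))
    have hR : HasFDerivAt (fun y => ∑ j, f (π y) i j * H y j)
        ((fderiv ℝ (fun p => f₀ p i) (π x)).comp π) x := by
      have heqf : (fun y => ∑ j, f (π y) i j * H y j)
          = fun y => f₀ (π y) i := by
        funext y
        exact heq i y
      rw [heqf]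
      exact (hf0d (π x)).hasFDerivAt.comp x π.hasFDerivAt
    have hEq := hL.unique hR
    have hπw : π w = 0 := by
      rw [hπx, hw1, hw2]; rfl
    have h2 := congrArg (fun L : ((Fin n → ℝ) × (Fin n → ℝ)) →L[ℝ] ℝ => L w) hEq
    simp only [ContinuousLinearMap.coe_sum', Finset.sum_apply,
      ContinuousLinearMap.add_apply, ContinuousLinearMap.coe_smul',
      Pi.smul_apply, ContinuousLinearMap.coe_comp', Function.comp_apply,
      hπw, map_zero, smul_zero, add_zero, smul_eq_mul] at h2
    have hπxx : π x = (x.1 i, x.2 i) := hπx x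
    rw [hπxx] at h2
    simpa using h2
  -- The derivative vectors lie in the kernel of the submatrix
  set M : Matrix {i : Fin n // i ≠ k} (Fin n) ℝ :=
    Matrix.of fun (i : {i : Fin n // i ≠ k}) (j : Fin n) =>
      f (x.1 i.1, x.2 i.1) i.1 j with hM
  have hMu : M.mulVec u = 0 := by
    funext i
    have := key i.1 (Pi.single k 1, 0) (Pi.single_eq_of_ne i.2 1) rfl
    simpa [Matrix.mulVec, dotProduct, hM, u, pa] using this
  have hMv : M.mulVec v = 0 := by
    funext i
    have := key i.1 (0, Pi.single k 1) rfl (Pi.single_eq_of_ne i.2 1)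
    simpa [Matrix.mulVec, dotProduct, hM, v, pb] using this
  have hu' : u ∈ LinearMap.ker M.mulVecLin := by
    simp [LinearMap.mem_ker, Matrix.mulVecLin_apply, hMu]
  have hv' : v ∈ LinearMap.ker M.mulVecLin := by
    simp [LinearMap.mem_ker, Matrix.mulVecLin_apply, hMv]
  have hker : Module.finrank ℝ (LinearMap.ker M.mulVecLin) ≤ 1 := by
    have h1 := LinearMap.finrank_range_add_finrank_ker M.mulVecLin
    have h2 : Module.finrank ℝ (LinearMap.range M.mulVecLin) = n - 1 := hrank
    rw [Module.finrank_fin_fun] at h1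
    omega
  obtain ⟨w₀, hw₀⟩ := finrank_le_one_iff.mp hker
  obtain ⟨c, hc⟩ := hw₀ ⟨u, hu'⟩
  obtain ⟨d, hd⟩ := hw₀ ⟨v, hv'⟩
  have hcu : ∀ j, u j = c * (w₀ : Fin n → ℝ) j := by
    intro j
    have h := congrArg Subtype.val hc
    have h2 := congrFun h j
    simpa using h2.symm
  have hdv : ∀ j, v j = d * (w₀ : Fin n → ℝ) j := by
    intro j
    have h := congrArg Subtype.val hd
    have h2 := congrFun h j
    simpa using h2.symm
  have part1 : ∃ α β : ℝ, ¬(α = 0 ∧ β = 0) ∧ ∀ j : Fin n,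
      α * u j + β * v j = 0 := by
    by_cases hcd : c = 0 ∧ d = 0
    · refine ⟨1, 0, by simp, fun j => ?_⟩
      rw [hcu j, hcd.1]; ring
    · refine ⟨d, -c, ?_, fun j => ?_⟩
      · rintro ⟨h1, h2⟩
        exact hcd ⟨by linarith, h1⟩
      · rw [hcu j, hdv j]; ring
  refine ⟨part1, ?_⟩
  obtain ⟨α, β, hne, hlin⟩ := part1
  intro i j
  by_cases hα : α = 0
  · have hβ : β ≠ 0 := fun h => hne ⟨hα, h⟩
    have hv0 : ∀ l, v l = 0 := by
      intro l
      have := hlin l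
      rw [hα] at this
      have : β * v l = 0 := by linarith
      exact (mul_eq_zero.mp this).resolve_left hβ
    show u i * v j - u j * v i = 0
    rw [hv0 i, hv0 j]; ring
  · have hul : ∀ l, u l = -(β / α) * v l := by
      intro l
      have := hlin l
      field_simp
      linarith
    show u i * v j - u j * v i = 0
    rw [hul i, hul j]; ring
end

section
/- Fix exponents (p₁,q₁),…,(pₙ,qₙ) ∈ ℕ² and a polynomial f₀ ∈ ℝ[x,y]. Suppose H₁,…,Hₙ : ℝ²ⁿ → ℝ are C¹ functions such that for every i the plane curve Σⱼ Hⱼ(a,b)·x^{pⱼ} y^{qⱼ} = f₀(x,y) passes through the point (aᵢ,bᵢ), i.e. Σⱼ Hⱼ(a,b)·aᵢ^{pⱼ} bᵢ^{qⱼ} = f₀(aᵢ,bᵢ) for all (a,b). If at a point (a,b) for every k the (n−1)×n matrix (aᵢ^{pⱼ} bᵢ^{qⱼ})_{i≠k,j} has rank n−1, then all pairwise canonical Poisson brackets {Hᵢ,Hⱼ} = Σₖ (∂Hᵢ/∂aₖ ∂Hⱼ/∂bₖ − ∂Hⱼ/∂aₖ ∂Hᵢ/∂bₖ) vanish at that point.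 -/
open Module

lemma my_dep {m : Type*} [Fintype m] {n : ℕ} (A : Matrix m (Fin n) ℝ)
    (h : A.rank = n - 1) (hn : 0 < n) (u v : Fin n → ℝ) (hu : A.mulVec u = 0)
    (hv : A.mulVec v = 0) (i j : Fin n) : u i * v j = u j * v i := by
  have hrn := LinearMap.finrank_range_add_finrank_ker A.mulVecLin
  rw [Module.finrank_fintype_fun_eq_card, Fintype.card_fin] at hrn
  have hrank : finrank ℝ (LinearMap.range A.mulVecLin) = n - 1 := h
  have hker : finrank ℝ (LinearMap.ker A.mulVecLin) = 1 := by omega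
  have hu' : u ∈ LinearMap.ker A.mulVecLin := by
    simp [LinearMap.mem_ker, Matrix.mulVecLin_apply, hu]
  have hv' : v ∈ LinearMap.ker A.mulVecLin := by
    simp [LinearMap.mem_ker, Matrix.mulVecLin_apply, hv]
  rcases eq_or_ne u 0 with rfl | hu0
  · simp
  · have hspan : Submodule.span ℝ {u} = LinearMap.ker A.mulVecLin := by
      apply Submodule.eq_of_le_of_finrank_le
      · rwa [Submodule.span_singleton_le_iff_mem]
      · rw [hker, finrank_span_singleton hu0]
    rw [← hspan, Submodule.mem_span_singleton] at hv'
    obtain ⟨c, rfl⟩ := hv'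
    simp [mul_comm, mul_left_comm, mul_assoc]


lemma my_pow_dir {E : Type*} [NormedAddCommGroup E] [NormedSpace ℝ E] (A : E →L[ℝ] ℝ) (m : ℕ)
    (x v : E) (hv : A v = 0) : fderiv ℝ (fun y => A y ^ m) x v = 0 := by
  have h : fderiv ℝ ((fun t : ℝ => t ^ m) ∘ A) x
      = (fderiv ℝ (fun t : ℝ => t ^ m) (A x)).comp (fderiv ℝ A x) :=
    fderiv_comp x (differentiableAt_pow m) A.differentiableAt
  rw [A.fderiv] at h
  have he : (fun y => A y ^ m) = (fun t : ℝ => t ^ m) ∘ A := rfl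
  rw [he, h]; simp [hv]

lemma my_key {n : ℕ} (p q : Fin n → ℕ) (f₀ : MvPolynomial (Fin 2) ℝ)
    (H : Fin n → (Fin n → ℝ) × (Fin n → ℝ) → ℝ)
    (hH : ∀ j, ContDiff ℝ 1 (H j))
    (heq : ∀ i (x : (Fin n → ℝ) × (Fin n → ℝ)),
      ∑ j, H j x * x.1 i ^ p j * x.2 i ^ q j = MvPolynomial.eval ![x.1 i, x.2 i] f₀)
    (x : (Fin n → ℝ) × (Fin n → ℝ)) (i : Fin n)
    (v : (Fin n → ℝ) × (Fin n → ℝ)) (hv1 : v.1 i = 0) (hv2 : v.2 i = 0) :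
    ∑ j, fderiv ℝ (H j) x v * (x.1 i ^ p j * x.2 i ^ q j) = 0 := by
  set A : (Fin n → ℝ) × (Fin n → ℝ) →L[ℝ] ℝ :=
    (ContinuousLinearMap.proj i).comp (ContinuousLinearMap.fst ℝ (Fin n → ℝ) (Fin n → ℝ)) with hA
  set B : (Fin n → ℝ) × (Fin n → ℝ) →L[ℝ] ℝ :=
    (ContinuousLinearMap.proj i).comp (ContinuousLinearMap.snd ℝ (Fin n → ℝ) (Fin n → ℝ)) with hB
  set Li : (Fin n → ℝ) × (Fin n → ℝ) →L[ℝ] (Fin 2 → ℝ) :=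
    ContinuousLinearMap.pi ![A, B] with hLidef
  have hLi : ∀ y : (Fin n → ℝ) × (Fin n → ℝ), Li y = ![y.1 i, y.2 i] := by
    intro y; funext m; fin_cases m <;> rfl
  have hg : Differentiable ℝ (fun w : Fin 2 → ℝ => MvPolynomial.eval w f₀) := fun w =>
    ((AnalyticOnNhd.eval_mvPolynomial (𝕜 := ℝ) f₀) w trivial).differentiableAt
  have hHd : ∀ j, DifferentiableAt ℝ (H j) x := fun j =>
    ((hH j).differentiable one_ne_zero).differentiableAt
  have hApow : ∀ m : ℕ, DifferentiableAt ℝ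
      (fun y : (Fin n → ℝ) × (Fin n → ℝ) => y.1 i ^ m) x := fun m =>
    DifferentiableAt.pow (A.differentiableAt (x := x)) m
  have hBpow : ∀ m : ℕ, DifferentiableAt ℝ
      (fun y : (Fin n → ℝ) × (Fin n → ℝ) => y.2 i ^ m) x := fun m =>
    DifferentiableAt.pow (B.differentiableAt (x := x)) m
  have hterm : ∀ j, DifferentiableAt ℝ
      (fun y : (Fin n → ℝ) × (Fin n → ℝ) => H j y * y.1 i ^ p j * y.2 i ^ q j) x :=
    fun j => ((hHd j).mul (hApow (p j))).mul (hBpow (q j))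
  have hLiv : Li v = 0 := by
    rw [hLi v]; funext m; fin_cases m <;> simp [hv1, hv2]
  have hcompd : DifferentiableAt ℝ
      (fun y : (Fin n → ℝ) × (Fin n → ℝ) => MvPolynomial.eval (Li y) f₀) x :=
    by exact DifferentiableAt.comp (g := fun w : Fin 2 → ℝ => MvPolynomial.eval w f₀) x (hg (Li x)) Li.differentiableAt
  have hcomp0 : fderiv ℝ
      (fun y : (Fin n → ℝ) × (Fin n → ℝ) => MvPolynomial.eval (Li y) f₀) x v = 0 := by
    have h : fderiv ℝ ((fun w : Fin 2 → ℝ => MvPolynomial.eval w f₀) ∘ Li) x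
        = (fderiv ℝ (fun w : Fin 2 → ℝ => MvPolynomial.eval w f₀) (Li x)).comp (fderiv ℝ Li x) :=
      fderiv_comp x (hg (Li x)) Li.differentiableAt
    rw [Li.fderiv] at h
    have he : (fun y : (Fin n → ℝ) × (Fin n → ℝ) => MvPolynomial.eval (Li y) f₀)
        = (fun w : Fin 2 → ℝ => MvPolynomial.eval w f₀) ∘ Li := rfl
    rw [he, h]
    simp [hLiv]
  have hsumD : DifferentiableAt ℝ
      (fun y : (Fin n → ℝ) × (Fin n → ℝ) => ∑ j, H j y * y.1 i ^ p j * y.2 i ^ q j) x :=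
    DifferentiableAt.fun_sum (fun j _ => hterm j)
  have hzero : (fun y : (Fin n → ℝ) × (Fin n → ℝ) =>
      (∑ j, H j y * y.1 i ^ p j * y.2 i ^ q j) - MvPolynomial.eval (Li y) f₀)
      = fun _ => (0:ℝ) := by
    funext y
    rw [hLi y, heq i y, sub_self]
  have h0 : fderiv ℝ (fun y : (Fin n → ℝ) × (Fin n → ℝ) =>
      (∑ j, H j y * y.1 i ^ p j * y.2 i ^ q j) - MvPolynomial.eval (Li y) f₀) x v = 0 := by
    rw [hzero]; simp
  rw [fderiv_fun_sub hsumD hcompd] at h0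
  simp only [ContinuousLinearMap.sub_apply] at h0
  rw [hcomp0, sub_zero, fderiv_fun_sum (fun j _ => hterm j),
    ContinuousLinearMap.sum_apply] at h0
  rw [← h0]
  apply Finset.sum_congr rfl
  intro j _
  have hpA : fderiv ℝ (fun y : (Fin n → ℝ) × (Fin n → ℝ) => y.1 i ^ p j) x v = 0 :=
    my_pow_dir A (p j) x v hv1
  have hpB : fderiv ℝ (fun y : (Fin n → ℝ) × (Fin n → ℝ) => y.2 i ^ q j) x v = 0 :=
    my_pow_dir B (q j) x v hv2
  have hinner : fderiv ℝ (fun y : (Fin n → ℝ) × (Fin n → ℝ) => H j y * y.1 i ^ p j) x v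
      = x.1 i ^ p j * fderiv ℝ (H j) x v := by
    rw [fderiv_fun_mul (hHd j) (hApow (p j))]
    simp [hpA]
  rw [show (fun y : (Fin n → ℝ) × (Fin n → ℝ) => H j y * y.1 i ^ p j * y.2 i ^ q j)
      = fun y : (Fin n → ℝ) × (Fin n → ℝ) => (H j y * y.1 i ^ p j) * y.2 i ^ q j from rfl,
    fderiv_fun_mul ((hHd j).fun_mul (hApow (p j))) (hBpow (q j))]
  simp only [ContinuousLinearMap.add_apply, ContinuousLinearMap.smul_apply, smul_eq_mul]
  rw [hinner, hpB]
  ring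

theorem stmt12 {n : ℕ} (p q : Fin n → ℕ) (f₀ : MvPolynomial (Fin 2) ℝ)
    (H : Fin n → (Fin n → ℝ) × (Fin n → ℝ) → ℝ)
    (hH : ∀ j, ContDiff ℝ 1 (H j))
    (heq : ∀ i (x : (Fin n → ℝ) × (Fin n → ℝ)),
      ∑ j, H j x * x.1 i ^ p j * x.2 i ^ q j = MvPolynomial.eval ![x.1 i, x.2 i] f₀)
    (x : (Fin n → ℝ) × (Fin n → ℝ))
    (hrank : ∀ k : Fin n, (Matrix.of fun (i : {i : Fin n // i ≠ k}) (j : Fin n) =>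
        x.1 i.1 ^ p j * x.2 i.1 ^ q j).rank = n - 1) :
    ∀ i j, ∑ k, (pa (H i) k x * pb (H j) k x - pa (H j) k x * pb (H i) k x) = 0 := by
  intro i j
  have hn : 0 < n := i.pos
  apply Finset.sum_eq_zero
  intro k _
  set Ak : Matrix {i : Fin n // i ≠ k} (Fin n) ℝ :=
    Matrix.of fun (i : {i : Fin n // i ≠ k}) (j : Fin n) =>
      x.1 i.1 ^ p j * x.2 i.1 ^ q j with hAk
  set u : Fin n → ℝ := fun j' => pa (H j') k x with hudef
  set w : Fin n → ℝ := fun j' => pb (H j') k x with hwdef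
  have hu : Ak.mulVec u = 0 := by
    funext i'
    have h1 : ((Pi.single k 1 : Fin n → ℝ), (0 : Fin n → ℝ)).1 i'.1 = 0 :=
      Pi.single_eq_of_ne i'.2 1
    have h2 : ((Pi.single k 1 : Fin n → ℝ), (0 : Fin n → ℝ)).2 i'.1 = 0 := rfl
    have := my_key p q f₀ H hH heq x i'.1 ((Pi.single k 1, 0)) h1 h2
    simp only [Matrix.mulVec, dotProduct, hAk, Matrix.of_apply, hudef, pa, Pi.zero_apply]
    rw [← this]
    exact Finset.sum_congr rfl fun j' _ => by ring
  have hw : Ak.mulVec w = 0 := by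
    funext i'
    have h1 : ((0 : Fin n → ℝ), (Pi.single k 1 : Fin n → ℝ)).1 i'.1 = 0 := rfl
    have h2 : ((0 : Fin n → ℝ), (Pi.single k 1 : Fin n → ℝ)).2 i'.1 = 0 :=
      Pi.single_eq_of_ne i'.2 1
    have := my_key p q f₀ H hH heq x i'.1 ((0, Pi.single k 1)) h1 h2
    simp only [Matrix.mulVec, dotProduct, hAk, Matrix.of_apply, hwdef, pb, Pi.zero_apply]
    rw [← this]
    exact Finset.sum_congr rfl fun j' _ => by ring
  have := my_dep Ak (hrank k) hn u w hu hw i j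
  show u i * w j - u j * w i = 0
  rw [this, sub_self]
end

section
/- With H(a,b) = V(a)⁻¹b the Lagrange interpolation coefficients (a₁,…,aₙ distinct), for each fixed k the vector ∂H/∂bₖ equals the k-th column of V(a)⁻¹, and the vector ∂H/∂aₖ equals −P'(aₖ) times that same column, where P is the interpolating polynomial; in particular ∂H/∂aₖ and ∂H/∂bₖ are proportional, with proportionality factor Mₖ = −P'(aₖ). -/
/-- The coefficient vector of the Lagrange interpolation polynomial through
`(a i, b i)`, as a function of `(a, b)`. -/
noncomputable def lagCoeff {n : ℕ} (x : (Fin n → ℝ) × (Fin n → ℝ)) : Fin n → ℝ :=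
  (Matrix.vandermonde x.1)⁻¹.mulVec x.2

open Matrix

section aux

variable {n : ℕ}

private lemma diff_proj1 (i : Fin n) :
    Differentiable ℝ (fun y : (Fin n → ℝ) × (Fin n → ℝ) => y.1 i) :=
  differentiable_pi.mp differentiable_fst i

private lemma diff_proj2 (i : Fin n) :
    Differentiable ℝ (fun y : (Fin n → ℝ) × (Fin n → ℝ) => y.2 i) :=
  differentiable_pi.mp differentiable_snd i

private lemma diff_prod {E : Type*} [NormedAddCommGroup E] [NormedSpace ℝ E]
    {ι : Type*} (u : Finset ι) (f : ι → E → ℝ)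
    (h : ∀ i, Differentiable ℝ (f i)) :
    Differentiable ℝ (fun y => ∏ i ∈ u, f i y) := by
  classical
  induction u using Finset.induction with
  | empty => simp only [Finset.prod_empty]; exact differentiable_const (1 : ℝ)
  | insert _ _ hne ih =>
    simp only [Finset.prod_insert hne]
    exact (h _).mul ih

private lemma diff_det {E : Type*} [NormedAddCommGroup E] [NormedSpace ℝ E]
    (M : E → Matrix (Fin n) (Fin n) ℝ)
    (h : ∀ i j, Differentiable ℝ (fun y => M y i j)) :
    Differentiable ℝ (fun y => (M y).det) := by
  simp only [Matrix.det_apply]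
  apply Differentiable.fun_sum
  intro σ _
  have hp : Differentiable ℝ (fun y => ∏ i, M y (σ i) i) :=
    diff_prod Finset.univ (fun i z => M z (σ i) i) (fun i => h (σ i) i)
  have : (fun y => Equiv.Perm.sign σ • ∏ i, M y (σ i) i)
      = fun y => ((Equiv.Perm.sign σ : ℤ) : ℝ) * ∏ i, M y (σ i) i := by
    funext y
    simp [Units.smul_def, zsmul_eq_mul]
  rw [this]
  exact hp.const_mul _

private lemma diff_vand (i j : Fin n) :
    Differentiable ℝ (fun y : (Fin n → ℝ) × (Fin n → ℝ) => Matrix.vandermonde y.1 i j) := by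
  simp only [Matrix.vandermonde_apply]
  exact (diff_proj1 i).pow _

private lemma diff_adj (i j : Fin n) :
    Differentiable ℝ (fun y : (Fin n → ℝ) × (Fin n → ℝ) =>
      (Matrix.vandermonde y.1).adjugate i j) := by
  simp only [Matrix.adjugate_apply]
  apply diff_det
  intro p q
  rcases eq_or_ne p j with h | h
  · simp only [Matrix.updateRow_apply, h, if_pos rfl]
    exact differentiable_const _
  · simp only [Matrix.updateRow_apply, h, if_neg h]
    exact diff_vand p q

private lemma diff_lag {x : (Fin n → ℝ) × (Fin n → ℝ)}
    (hdet : (Matrix.vandermonde x.1).det ≠ 0) (j : Fin n) :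
    DifferentiableAt ℝ (fun y => lagCoeff y j) x := by
  have hform : (fun y : (Fin n → ℝ) × (Fin n → ℝ) => lagCoeff y j) =
      fun y => ∑ i, (((Matrix.vandermonde y.1).det)⁻¹
        * (Matrix.vandermonde y.1).adjugate j i) * y.2 i := by
    funext y
    simp [lagCoeff, Matrix.mulVec, dotProduct, Matrix.inv_def,
      Ring.inverse_eq_inv', Matrix.smul_apply, smul_eq_mul]
  rw [hform]
  apply DifferentiableAt.fun_sum
  intro i _
  have hdd : Differentiable ℝ
      (fun y : (Fin n → ℝ) × (Fin n → ℝ) => (Matrix.vandermonde y.1).det) :=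
    diff_det _ diff_vand
  exact (((hdd x).inv hdet).mul (diff_adj j i x)).mul (diff_proj2 i x)

private lemma system {x : (Fin n → ℝ) × (Fin n → ℝ)}
    (hdet : (Matrix.vandermonde x.1).det ≠ 0)
    (v : (Fin n → ℝ) × (Fin n → ℝ)) (i : Fin n) :
    ∑ j : Fin n, ((((j : ℕ) : ℝ) * x.1 i ^ ((j : ℕ) - 1) * v.1 i) * lagCoeff x j
        + x.1 i ^ (j : ℕ) * fderiv ℝ (fun y => lagCoeff y j) x v) = v.2 i := by
  set γ : ℝ → (Fin n → ℝ) × (Fin n → ℝ) := fun t => x + t • v with hγdef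
  have hγ0 : γ 0 = x := by simp [hγdef]
  have hγ : HasDerivAt γ v 0 := by
    have h := ((hasDerivAt_id (0 : ℝ)).smul_const v).const_add x
    simpa [hγdef] using h
  have hline : ∀ p : Fin n, HasDerivAt (fun t => (γ t).1 p) (v.1 p) 0 := by
    intro p
    have h1 : (fun t : ℝ => (γ t).1 p) = fun t => x.1 p + t * v.1 p := by
      funext t; simp [hγdef]
    rw [h1]
    simpa using ((hasDerivAt_id (0 : ℝ)).mul_const (v.1 p)).const_add (x.1 p)
  have hline2 : ∀ p : Fin n, HasDerivAt (fun t => (γ t).2 p) (v.2 p) 0 := by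
    intro p
    have h1 : (fun t : ℝ => (γ t).2 p) = fun t => x.2 p + t * v.2 p := by
      funext t; simp [hγdef]
    rw [h1]
    simpa using ((hasDerivAt_id (0 : ℝ)).mul_const (v.2 p)).const_add (x.2 p)
  have hH : ∀ j : Fin n, HasDerivAt (fun t => lagCoeff (γ t) j)
      (fderiv ℝ (fun y => lagCoeff y j) x v) 0 := by
    intro j
    have hd := (diff_lag hdet j).hasFDerivAt
    have hd' : HasFDerivAt (fun y => lagCoeff y j)
        (fderiv ℝ (fun y => lagCoeff y j) x) (γ 0) := by rwa [hγ0]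
    exact hd'.comp_hasDerivAt 0 hγ
  have hφ : HasDerivAt (fun t => ∑ j : Fin n, ((γ t).1 i) ^ (j : ℕ) * lagCoeff (γ t) j)
      (∑ j : Fin n, ((((j : ℕ) : ℝ) * x.1 i ^ ((j : ℕ) - 1) * v.1 i) * lagCoeff x j
        + x.1 i ^ (j : ℕ) * fderiv ℝ (fun y => lagCoeff y j) x v)) 0 := by
    apply HasDerivAt.fun_sum
    intro j _
    have hp : HasDerivAt (fun t => ((γ t).1 i) ^ (j : ℕ))
        ((((j : ℕ) : ℝ)) * x.1 i ^ ((j : ℕ) - 1) * v.1 i) 0 := by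
      have h := (hline i).fun_pow (j : ℕ)
      simpa [hγ0] using h
    have h := hp.fun_mul (hH j)
    simpa [hγ0] using h
  have hdd : Differentiable ℝ
      (fun y : (Fin n → ℝ) × (Fin n → ℝ) => (Matrix.vandermonde y.1).det) :=
    diff_det _ diff_vand
  have hcont : ContinuousAt (fun t => (Matrix.vandermonde (γ t).1).det) 0 := by
    have h := ContinuousAt.comp (x := (0 : ℝ))
      (g := fun y : (Fin n → ℝ) × (Fin n → ℝ) => (Matrix.vandermonde y.1).det)
      (f := γ) (hdd.continuous.continuousAt) hγ.continuousAt
    exact h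
  have hev : ∀ᶠ t in nhds (0 : ℝ), (Matrix.vandermonde (γ t).1).det ≠ 0 := by
    have h0 : (Matrix.vandermonde (γ 0).1).det ≠ 0 := by rwa [hγ0]
    exact hcont.eventually_ne h0
  have heq : (fun t => (γ t).2 i) =ᶠ[nhds (0 : ℝ)]
      (fun t => ∑ j : Fin n, ((γ t).1 i) ^ (j : ℕ) * lagCoeff (γ t) j) := by
    filter_upwards [hev] with t ht
    have hu : IsUnit (Matrix.vandermonde (γ t).1).det := isUnit_iff_ne_zero.mpr ht
    have h1 : (Matrix.vandermonde (γ t).1).mulVec (lagCoeff (γ t)) = (γ t).2 := by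
      rw [lagCoeff, Matrix.mulVec_mulVec, Matrix.mul_nonsing_inv _ hu, Matrix.one_mulVec]
    have h2 := congrFun h1 i
    simp only [Matrix.mulVec, dotProduct, Matrix.vandermonde_apply] at h2
    exact h2.symm
  have hψ : HasDerivAt (fun t => (γ t).2 i)
      (∑ j : Fin n, ((((j : ℕ) : ℝ) * x.1 i ^ ((j : ℕ) - 1) * v.1 i) * lagCoeff x j
        + x.1 i ^ (j : ℕ) * fderiv ℝ (fun y => lagCoeff y j) x v)) 0 :=
    hφ.congr_of_eventuallyEq heq
  exact hψ.unique (hline2 i)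

end aux

theorem stmt15 {n : ℕ} (x : (Fin n → ℝ) × (Fin n → ℝ))
    (ha : Function.Injective x.1) (k : Fin n) :
    ∀ j : Fin n,
      fderiv ℝ (fun y => lagCoeff y j) x ((0 : Fin n → ℝ), Pi.single k 1)
        = (Matrix.vandermonde x.1)⁻¹ j k ∧
      fderiv ℝ (fun y => lagCoeff y j) x (Pi.single k 1, (0 : Fin n → ℝ))
        = -(∑ l : Fin n, (l : ℝ) * lagCoeff x l * x.1 k ^ ((l : ℕ) - 1))
            * (Matrix.vandermonde x.1)⁻¹ j k := by
  intro j
  have hdet : (Matrix.vandermonde x.1).det ≠ 0 :=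
    Matrix.det_vandermonde_ne_zero_iff.mpr ha
  have hu : IsUnit (Matrix.vandermonde x.1).det := isUnit_iff_ne_zero.mpr hdet
  have key : ∀ v : (Fin n → ℝ) × (Fin n → ℝ),
      (fun j' => fderiv ℝ (fun y => lagCoeff y j') x v) =
      (Matrix.vandermonde x.1)⁻¹.mulVec (fun i => v.2 i
        - v.1 i * (∑ l : Fin n, ((l : ℕ) : ℝ) * lagCoeff x l * x.1 i ^ ((l : ℕ) - 1))) := by
    intro v
    have hmv : (Matrix.vandermonde x.1).mulVec
        (fun j' => fderiv ℝ (fun y => lagCoeff y j') x v) = fun i => v.2 i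
        - v.1 i * (∑ l : Fin n, ((l : ℕ) : ℝ) * lagCoeff x l * x.1 i ^ ((l : ℕ) - 1)) := by
      funext i
      have hs := system hdet v i
      rw [Finset.sum_add_distrib] at hs
      have h2 : ∑ j' : Fin n, (((j' : ℕ) : ℝ) * x.1 i ^ ((j' : ℕ) - 1) * v.1 i) * lagCoeff x j'
          = v.1 i * ∑ l : Fin n, ((l : ℕ) : ℝ) * lagCoeff x l * x.1 i ^ ((l : ℕ) - 1) := by
        rw [Finset.mul_sum]
        exact Finset.sum_congr rfl fun l _ => by ring
      simp only [Matrix.mulVec, dotProduct, Matrix.vandermonde_apply]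
      linarith [hs, h2]
    calc (fun j' => fderiv ℝ (fun y => lagCoeff y j') x v)
        = (Matrix.vandermonde x.1)⁻¹.mulVec ((Matrix.vandermonde x.1).mulVec
            (fun j' => fderiv ℝ (fun y => lagCoeff y j') x v)) := by
          rw [Matrix.mulVec_mulVec, Matrix.nonsing_inv_mul _ hu, Matrix.one_mulVec]
      _ = _ := by rw [hmv]
  constructor
  · have h := congrFun (key ((0 : Fin n → ℝ), Pi.single k 1)) j
    simp only at h
    rw [h]
    have hvec : (fun i => (Pi.single k 1 : Fin n → ℝ) i
        - (0 : Fin n → ℝ) i * (∑ l : Fin n, ((l : ℕ) : ℝ) * lagCoeff x l * x.1 i ^ ((l : ℕ) - 1)))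
        = (Pi.single k 1 : Fin n → ℝ) := by
      funext i; simp
    rw [hvec, Matrix.mulVec_single]
    simp
  · have h := congrFun (key (Pi.single k 1, (0 : Fin n → ℝ))) j
    simp only at h
    rw [h]
    have hvec : (fun i => (0 : Fin n → ℝ) i
        - (Pi.single k 1 : Fin n → ℝ) i * (∑ l : Fin n, ((l : ℕ) : ℝ) * lagCoeff x l * x.1 i ^ ((l : ℕ) - 1)))
        = Pi.single k (-(∑ l : Fin n, ((l : ℕ) : ℝ) * lagCoeff x l * x.1 k ^ ((l : ℕ) - 1))) := by
      funext i
      rcases eq_or_ne i k with rfl | hik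
      · simp
      · simp [Pi.single_eq_of_ne hik]
    rw [hvec, Matrix.mulVec_single]
    show (Matrix.vandermonde x.1)⁻¹ j k
        * (-(∑ l : Fin n, ((l : ℕ) : ℝ) * lagCoeff x l * x.1 k ^ ((l : ℕ) - 1))) = _
    ring
end

section
/- The coefficients H₁,…,Hₙ of the Lagrange interpolation polynomial through (a₁,b₁),…,(aₙ,bₙ) (a's distinct) pairwise commute under the canonical Poisson bracket: for all i,j, Σ_{k=1}^{n} (∂Hᵢ/∂aₖ ∂Hⱼ/∂bₖ − ∂Hⱼ/∂aₖ ∂Hᵢ/∂bₖ) = 0 on the open set of pairwise-distinct a. -/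
theorem stmt16 {n : ℕ} (x : (Fin n → ℝ) × (Fin n → ℝ)) (ha : Function.Injective x.1) :
    ∀ i j : Fin n,
      ∑ k, (pa (fun y => lagCoeff y i) k x * pb (fun y => lagCoeff y j) k x
        - pa (fun y => lagCoeff y j) k x * pb (fun y => lagCoeff y i) k x) = 0 := by

  classical
  letI : NormedRing (Matrix (Fin n) (Fin n) ℝ) := Matrix.linftyOpNormedRing
  letI : NormedAlgebra ℝ (Matrix (Fin n) (Fin n) ℝ) := Matrix.linftyOpNormedAlgebra
  haveI : FiniteDimensional ℝ (Matrix (Fin n) (Fin n) ℝ) := by infer_instance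
  haveI : CompleteSpace (Matrix (Fin n) (Fin n) ℝ) := FiniteDimensional.complete ℝ _
  -- the entry-evaluation continuous linear maps
  have hE : ∀ i m : Fin n, ∃ e : Matrix (Fin n) (Fin n) ℝ →L[ℝ] ℝ, ∀ M, e M = M i m := fun i m =>
    ⟨LinearMap.toContinuousLinearMap ⟨⟨fun M => M i m, fun _ _ => rfl⟩, fun _ _ => rfl⟩,
      fun M => rfl⟩
  choose e he using hE
  set V : Matrix (Fin n) (Fin n) ℝ := Matrix.vandermonde x.1 with hV
  have hdet : IsUnit V := by
    rw [Matrix.isUnit_iff_isUnit_det, isUnit_iff_ne_zero, hV, Matrix.det_vandermonde]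
    refine Finset.prod_ne_zero_iff.2 fun p _ => Finset.prod_ne_zero_iff.2 fun q hq => ?_
    refine sub_ne_zero.2 fun h => ?_
    have := ha h
    rw [this] at hq
    exact absurd (Finset.mem_Ioi.1 hq) (lt_irrefl _)
  obtain ⟨u, hu⟩ := hdet
  set W : Matrix (Fin n) (Fin n) ℝ := Ring.inverse V with hWdef
  have hWinv : W = V⁻¹ := (Matrix.nonsing_inv_eq_ringInverse V).symm
  have huinv : (↑u⁻¹ : Matrix (Fin n) (Fin n) ℝ) = W := by
    rw [hWdef, ← hu, Ring.inverse_unit]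
  -- derivative of the Vandermonde map
  set LV : ((Fin n → ℝ) × (Fin n → ℝ)) →L[ℝ] Matrix (Fin n) (Fin n) ℝ :=
    ∑ p : Fin n, ∑ q : Fin n,
      ((((q : ℕ) : ℝ) * x.1 p ^ ((q : ℕ) - 1)) •
        ((ContinuousLinearMap.proj p).comp
          (ContinuousLinearMap.fst ℝ (Fin n → ℝ) (Fin n → ℝ)))).smulRight
        (Matrix.single p q (1 : ℝ)) with hLV
  have hVder : HasFDerivAt (fun y : (Fin n → ℝ) × (Fin n → ℝ) => Matrix.vandermonde y.1) LV x := by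
    have h1 : ∀ y : (Fin n → ℝ) × (Fin n → ℝ), Matrix.vandermonde y.1 =
        ∑ p : Fin n, ∑ q : Fin n, (y.1 p ^ (q : ℕ)) • Matrix.single p q (1 : ℝ) := by
      intro y
      ext r s
      simp [Matrix.vandermonde, Matrix.sum_apply, Matrix.single, Matrix.smul_apply,
        ite_and, Finset.sum_ite_eq, Finset.sum_ite_eq']
    refine HasFDerivAt.congr_of_eventuallyEq ?_ (Filter.Eventually.of_forall h1)
    rw [hLV]
    refine HasFDerivAt.fun_sum fun p _ => HasFDerivAt.fun_sum fun q _ => ?_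
    exact ((hasDerivAt_pow (q : ℕ) (x.1 p)).comp_hasFDerivAt x
      (((ContinuousLinearMap.proj p).comp
        (ContinuousLinearMap.fst ℝ (Fin n → ℝ) (Fin n → ℝ))).hasFDerivAt)).smul_const _
  -- derivative of the inverse-Vandermonde map
  have hWder : HasFDerivAt
      (fun y : (Fin n → ℝ) × (Fin n → ℝ) => Ring.inverse (Matrix.vandermonde y.1))
      ((-(ContinuousLinearMap.mulLeftRight ℝ _ W W)).comp LV) x := by
    have h := hasFDerivAt_ringInverse (𝕜 := ℝ) u
    rw [hu, huinv] at h
    exact h.comp x hVder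
  -- derivative of each lagCoeff component
  have hLag : ∀ i : Fin n, HasFDerivAt (fun y => lagCoeff y i)
      (∑ m : Fin n, ((W i m) •
          ((ContinuousLinearMap.proj m).comp (ContinuousLinearMap.snd ℝ (Fin n → ℝ) (Fin n → ℝ)))
        + x.2 m • ((e i m).comp ((-(ContinuousLinearMap.mulLeftRight ℝ _ W W)).comp LV)))) x := by
    intro i
    have h1 : ∀ y : (Fin n → ℝ) × (Fin n → ℝ), lagCoeff y i =
        ∑ m : Fin n, Ring.inverse (Matrix.vandermonde y.1) i m * y.2 m := by
      intro y
      simp [lagCoeff, Matrix.mulVec, dotProduct, ← Matrix.nonsing_inv_eq_ringInverse]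
    refine HasFDerivAt.congr_of_eventuallyEq ?_ (Filter.Eventually.of_forall h1)
    refine HasFDerivAt.fun_sum fun m _ => ?_
    have hent : HasFDerivAt
        (fun y : (Fin n → ℝ) × (Fin n → ℝ) => Ring.inverse (Matrix.vandermonde y.1) i m)
        ((e i m).comp ((-(ContinuousLinearMap.mulLeftRight ℝ _ W W)).comp LV)) x := by
      have := (e i m).hasFDerivAt.comp x hWder
      simp only [Function.comp_def, he] at this
      exact this
    have hb : HasFDerivAt (fun y : (Fin n → ℝ) × (Fin n → ℝ) => y.2 m)
        ((ContinuousLinearMap.proj m).comp (ContinuousLinearMap.snd ℝ (Fin n → ℝ) (Fin n → ℝ))) x :=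
      ((ContinuousLinearMap.proj m).comp
        (ContinuousLinearMap.snd ℝ (Fin n → ℝ) (Fin n → ℝ))).hasFDerivAt
    exact hent.mul hb
  -- values of LV on the two kinds of directions
  have hLVb : ∀ k : Fin n, LV ((0 : Fin n → ℝ), Pi.single k (1:ℝ)) = 0 := by
    intro k
    rw [hLV]
    simp
  have hLVa : ∀ k : Fin n, LV (Pi.single k (1:ℝ), (0 : Fin n → ℝ)) =
      Matrix.of (fun r s : Fin n =>
        if r = k then ((s : ℕ) : ℝ) * x.1 k ^ ((s : ℕ) - 1) else 0) := by
    intro k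
    rw [hLV]
    ext r s
    simp only [ContinuousLinearMap.sum_apply, ContinuousLinearMap.smulRight_apply,
      ContinuousLinearMap.smul_apply, ContinuousLinearMap.comp_apply,
      ContinuousLinearMap.proj_apply, ContinuousLinearMap.coe_fst', Matrix.sum_apply,
      Matrix.smul_apply, Matrix.single, Matrix.of_apply, Pi.single_apply,
      smul_eq_mul, mul_ite, mul_one, mul_zero, ite_mul, zero_mul, one_mul, ite_and,
      Finset.sum_ite_eq, Finset.sum_ite_eq', Finset.mem_univ, if_true]
    by_cases hrk : r = k <;> simp [hrk]
  -- value of pb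
  have hcomp : ∀ (i m : Fin n) (v : (Fin n → ℝ) × (Fin n → ℝ)),
      ((e i m).comp ((-(ContinuousLinearMap.mulLeftRight ℝ _ W W)).comp LV)) v
        = e i m (-(W * LV v * W)) := fun _ _ _ => rfl
  have hpb : ∀ i k : Fin n, pb (fun y => lagCoeff y i) k x = W i k := by
    intro i k
    have := (hLag i).fderiv
    simp only [pb, this, ContinuousLinearMap.sum_apply, ContinuousLinearMap.add_apply,
      ContinuousLinearMap.smul_apply, ContinuousLinearMap.comp_apply,
      ContinuousLinearMap.proj_apply, ContinuousLinearMap.coe_snd',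
      ContinuousLinearMap.neg_apply, ContinuousLinearMap.mulLeftRight_apply, hcomp, hLVb k, he]
    simp [Pi.single_apply, mul_ite]
  set c : Fin n → ℝ := fun k =>
    ∑ s : Fin n, ((s : ℕ) : ℝ) * x.1 k ^ ((s : ℕ) - 1) * (∑ m : Fin n, W s m * x.2 m) with hc
  have hpa : ∀ i k : Fin n, pa (fun y => lagCoeff y i) k x = -(W i k * c k) := by
    intro i k
    have := (hLag i).fderiv
    simp only [pa, this, ContinuousLinearMap.sum_apply, ContinuousLinearMap.add_apply,
      ContinuousLinearMap.smul_apply, ContinuousLinearMap.comp_apply,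
      ContinuousLinearMap.proj_apply, ContinuousLinearMap.coe_snd',
      ContinuousLinearMap.coe_fst', ContinuousLinearMap.neg_apply,
      ContinuousLinearMap.mulLeftRight_apply, hcomp, hLVa k, he]
    simp only [Matrix.neg_apply, Matrix.mul_apply, Matrix.of_apply, mul_ite, ite_mul,
      mul_zero, zero_mul, Finset.sum_ite_eq', Finset.mem_univ, if_true, Pi.zero_apply,
      smul_eq_mul, mul_zero, zero_add, hc]
    simp only [mul_neg, Finset.mul_sum, ← Finset.sum_neg_distrib]
    conv_lhs => rw [Finset.sum_comm]
    exact Finset.sum_congr rfl fun s _ => Finset.sum_congr rfl fun m _ => by ring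
  intro i j
  refine Finset.sum_eq_zero fun k _ => ?_
  rw [hpa i k, hpa j k, hpb i k, hpb j k]
  ring
end

section
/- Fix nonzero integer exponents m₁ < m₂ < … < mₙ (allowing negative values). For points (a₁,b₁),…,(aₙ,bₙ) with aᵢ nonzero and the generalized Vandermonde matrix (aᵢ^{mⱼ}) invertible, the coefficients H₁,…,Hₙ of the Laurent polynomial L(x) = Σⱼ Hⱼ x^{mⱼ} with L(aᵢ) = bᵢ, viewed as functions of (a,b), pairwise Poisson commute with respect to the canonical bracket on that open set. -/
/-- Generalized Vandermonde matrix with integer exponents `m`. -/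
noncomputable def genVandermonde {n : ℕ} (m : Fin n → ℤ) (a : Fin n → ℝ) :
    Matrix (Fin n) (Fin n) ℝ :=
  Matrix.of fun i j => a i ^ m j

/-- Coefficients of the interpolating Laurent polynomial `L(x) = ∑ⱼ Hⱼ x^{mⱼ}`. -/
noncomputable def laurentCoeff {n : ℕ} (m : Fin n → ℤ)
    (x : (Fin n → ℝ) × (Fin n → ℝ)) : Fin n → ℝ :=
  (genVandermonde m x.1)⁻¹.mulVec x.2

section aux

variable {n : ℕ}

/-- Differentiability of the determinant of a matrix with differentiable entries. -/
lemma det_diffAt {E : Type*} [NormedAddCommGroup E] [NormedSpace ℝ E]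
    (f : E → Matrix (Fin n) (Fin n) ℝ) (x : E)
    (h : ∀ i j, DifferentiableAt ℝ (fun e => f e i j) x) :
    DifferentiableAt ℝ (fun e => (f e).det) x := by
  simp only [Matrix.det_apply']
  exact DifferentiableAt.fun_sum fun σ _ =>
    DifferentiableAt.const_mul
      (HasFDerivAt.finset_prod (u := (Finset.univ : Finset (Fin n)))
        (fun i _ => (h (σ i) i).hasFDerivAt)).differentiableAt _

end aux

theorem stmt17 {n : ℕ} (m : Fin n → ℤ) (hm : StrictMono m) (hm0 : ∀ j, m j ≠ 0) :
    ∀ x : (Fin n → ℝ) × (Fin n → ℝ), (∀ i, x.1 i ≠ 0) →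
      IsUnit (genVandermonde m x.1).det →
      ∀ i j : Fin n,
        ∑ k, (pa (fun y => laurentCoeff m y i) k x * pb (fun y => laurentCoeff m y j) k x
          - pa (fun y => laurentCoeff m y j) k x * pb (fun y => laurentCoeff m y i) k x) = 0 := by
  classical
  intro x hx1 hdet i j
  set V := genVandermonde m x.1 with hVdef
  set W := V⁻¹ with hWdef
  have h0 : V.det ≠ 0 := hdet.ne_zero
  -- derivatives of the matrix entries
  have hent : ∀ l p, HasFDerivAt (fun y : (Fin n → ℝ) × (Fin n → ℝ) => y.1 l ^ m p)
      ((((m p : ℝ) * x.1 l ^ (m p - 1)) • ((ContinuousLinearMap.proj l).comp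
        (ContinuousLinearMap.fst ℝ (Fin n → ℝ) (Fin n → ℝ)))) : _ →L[ℝ] ℝ) x := by
    intro l p
    have h1 : HasDerivAt (fun t : ℝ => t ^ m p) ((m p : ℝ) * x.1 l ^ (m p - 1)) (x.1 l) :=
      hasDerivAt_zpow (m p) (x.1 l) (Or.inl (hx1 l))
    have h2 : HasFDerivAt (fun y : (Fin n → ℝ) × (Fin n → ℝ) => y.1 l)
        ((ContinuousLinearMap.proj l).comp
          (ContinuousLinearMap.fst ℝ (Fin n → ℝ) (Fin n → ℝ))) x :=
      ((ContinuousLinearMap.proj l).comp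
        (ContinuousLinearMap.fst ℝ (Fin n → ℝ) (Fin n → ℝ))).hasFDerivAt
    exact h1.comp_hasFDerivAt x h2
  have hentD : ∀ l p, DifferentiableAt ℝ
      (fun y : (Fin n → ℝ) × (Fin n → ℝ) => y.1 l ^ m p) x :=
    fun l p => (hent l p).differentiableAt
  -- differentiability of the determinant
  have hVd : DifferentiableAt ℝ
      (fun y : (Fin n → ℝ) × (Fin n → ℝ) => (genVandermonde m y.1).det) x := by
    exact det_diffAt (fun y : (Fin n → ℝ) × (Fin n → ℝ) => genVandermonde m y.1) x
      (fun l p => hentD l p)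
  -- differentiability of adjugate entries
  have hadj : ∀ p q, DifferentiableAt ℝ
      (fun y : (Fin n → ℝ) × (Fin n → ℝ) => (genVandermonde m y.1).adjugate p q) x := by
    intro p q
    simp only [Matrix.adjugate_apply]
    refine det_diffAt (fun y => (genVandermonde m y.1).updateRow q (Pi.single p 1)) x ?_
    intro l r
    by_cases hl : l = q
    · subst hl
      simp only [Matrix.updateRow_self]
      exact differentiableAt_const _
    · simp only [Matrix.updateRow_ne hl]
      exact hentD l r
  -- differentiability of the Laurent coefficients
  have hdiffH : ∀ p, DifferentiableAt ℝ (fun y => laurentCoeff m y p) x := by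
    intro p
    have heq : (fun y : (Fin n → ℝ) × (Fin n → ℝ) => laurentCoeff m y p)
        = fun y => ((genVandermonde m y.1).det)⁻¹ *
            ∑ q, (genVandermonde m y.1).adjugate p q * y.2 q := by
      funext y
      simp only [laurentCoeff, Matrix.inv_def, Ring.inverse_eq_inv', Matrix.mulVec,
        dotProduct, Matrix.smul_apply, Pi.smul_apply, smul_eq_mul,
        Finset.mul_sum]
      exact Finset.sum_congr rfl fun q _ => by ring
    rw [heq]
    refine DifferentiableAt.mul (hVd.inv h0) ?_
    exact DifferentiableAt.fun_sum fun q _ =>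
      (hadj p q).mul (((ContinuousLinearMap.proj q).comp
        (ContinuousLinearMap.snd ℝ (Fin n → ℝ) (Fin n → ℝ))).differentiableAt)
  have hL : ∀ p, HasFDerivAt (fun y => laurentCoeff m y p)
      (fderiv ℝ (fun y => laurentCoeff m y p) x) x :=
    fun p => (hdiffH p).hasFDerivAt
  -- the interpolation relation holds near x
  have hev : ∀ r, (fun y : (Fin n → ℝ) × (Fin n → ℝ) =>
      ∑ q, (y.1 r ^ m q) * laurentCoeff m y q) =ᶠ[nhds x] fun y => y.2 r := by
    intro r
    have hc : ContinuousAt (fun y : (Fin n → ℝ) × (Fin n → ℝ) =>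
        (genVandermonde m y.1).det) x := hVd.continuousAt
    filter_upwards [hc.eventually_ne h0] with y hy
    have hmul : (genVandermonde m y.1) * (genVandermonde m y.1)⁻¹ = 1 :=
      Matrix.mul_nonsing_inv _ (isUnit_iff_ne_zero.mpr hy)
    have : (genVandermonde m y.1).mulVec ((genVandermonde m y.1)⁻¹.mulVec y.2) r = y.2 r := by
      rw [Matrix.mulVec_mulVec, hmul, Matrix.one_mulVec]
    calc ∑ q, (y.1 r ^ m q) * laurentCoeff m y q
        = (genVandermonde m y.1).mulVec ((genVandermonde m y.1)⁻¹.mulVec y.2) r := by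
          simp only [Matrix.mulVec, dotProduct, laurentCoeff, genVandermonde,
            Matrix.of_apply]
      _ = y.2 r := this
  -- derivative of both sides of the relation
  have huniq : ∀ r,
      (∑ q, ((x.1 r ^ m q) • fderiv ℝ (fun y => laurentCoeff m y q) x
        + laurentCoeff m x q • (((m q : ℝ) * x.1 r ^ (m q - 1)) •
          ((ContinuousLinearMap.proj r).comp
            (ContinuousLinearMap.fst ℝ (Fin n → ℝ) (Fin n → ℝ))))))
      = (ContinuousLinearMap.proj r).comp
          (ContinuousLinearMap.snd ℝ (Fin n → ℝ) (Fin n → ℝ)) := by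
    intro r
    have hsum : HasFDerivAt (fun y : (Fin n → ℝ) × (Fin n → ℝ) =>
        ∑ q, (y.1 r ^ m q) * laurentCoeff m y q)
        (∑ q, ((x.1 r ^ m q) • fderiv ℝ (fun y => laurentCoeff m y q) x
          + laurentCoeff m x q • (((m q : ℝ) * x.1 r ^ (m q - 1)) •
            ((ContinuousLinearMap.proj r).comp
              (ContinuousLinearMap.fst ℝ (Fin n → ℝ) (Fin n → ℝ)))))) x := by
      refine HasFDerivAt.fun_sum fun q _ => ?_
      exact (hent r q).mul (hL q)
    have hB : HasFDerivAt (fun y : (Fin n → ℝ) × (Fin n → ℝ) => y.2 r)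
        ((ContinuousLinearMap.proj r).comp
          (ContinuousLinearMap.snd ℝ (Fin n → ℝ) (Fin n → ℝ))) x :=
      ((ContinuousLinearMap.proj r).comp
        (ContinuousLinearMap.snd ℝ (Fin n → ℝ) (Fin n → ℝ))).hasFDerivAt
    exact hsum.unique (hB.congr_of_eventuallyEq (hev r))
  -- evaluate at the basis directions
  have eq_b : ∀ r k, ∑ q, (x.1 r ^ m q) *
      pb (fun y => laurentCoeff m y q) k x = (Pi.single k 1 : Fin n → ℝ) r := by
    intro r k
    have := congrArg (fun Φ : ((Fin n → ℝ) × (Fin n → ℝ)) →L[ℝ] ℝ =>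
      Φ ((0 : Fin n → ℝ), (Pi.single k 1 : Fin n → ℝ))) (huniq r)
    simp only [ContinuousLinearMap.coe_sum', Finset.sum_apply,
      ContinuousLinearMap.add_apply, ContinuousLinearMap.coe_smul', Pi.smul_apply,
      ContinuousLinearMap.coe_comp', Function.comp_apply,
      ContinuousLinearMap.coe_fst', ContinuousLinearMap.coe_snd',
      ContinuousLinearMap.proj_apply, smul_eq_mul, Pi.zero_apply, mul_zero,
      add_zero] at this
    have hpb : ∀ q, pb (fun y => laurentCoeff m y q) k x
        = fderiv ℝ (fun y => laurentCoeff m y q) x ((0 : Fin n → ℝ), Pi.single k 1) :=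
      fun q => rfl
    simpa [hpb] using this
  have eq_a : ∀ r k, (∑ q, (x.1 r ^ m q) * pa (fun y => laurentCoeff m y q) k x)
      + (Pi.single k 1 : Fin n → ℝ) r *
        (∑ q, laurentCoeff m x q * ((m q : ℝ) * x.1 r ^ (m q - 1))) = 0 := by
    intro r k
    have := congrArg (fun Φ : ((Fin n → ℝ) × (Fin n → ℝ)) →L[ℝ] ℝ =>
      Φ ((Pi.single k 1 : Fin n → ℝ), (0 : Fin n → ℝ))) (huniq r)
    simp only [ContinuousLinearMap.coe_sum', Finset.sum_apply,
      ContinuousLinearMap.add_apply, ContinuousLinearMap.coe_smul', Pi.smul_apply,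
      ContinuousLinearMap.coe_comp', Function.comp_apply,
      ContinuousLinearMap.coe_fst', ContinuousLinearMap.coe_snd',
      ContinuousLinearMap.proj_apply, smul_eq_mul, Pi.zero_apply] at this
    have hpa : ∀ q, pa (fun y => laurentCoeff m y q) k x
        = fderiv ℝ (fun y => laurentCoeff m y q) x (Pi.single k 1, (0 : Fin n → ℝ)) :=
      fun q => rfl
    rw [Finset.mul_sum, ← Finset.sum_add_distrib]
    refine Eq.trans (Finset.sum_congr rfl fun q _ => ?_) (this.trans rfl)
    rw [hpa q]; ring
  -- matrix formulation
  set c : Fin n → ℝ := fun k =>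
    ∑ q, laurentCoeff m x q * ((m q : ℝ) * x.1 k ^ (m q - 1)) with hc
  set PbM : Matrix (Fin n) (Fin n) ℝ :=
    Matrix.of fun q k => pb (fun y => laurentCoeff m y q) k x with hPbM
  set PaM : Matrix (Fin n) (Fin n) ℝ :=
    Matrix.of fun q k => pa (fun y => laurentCoeff m y q) k x with hPaM
  have hVPb : V * PbM = 1 := by
    ext r k
    rw [Matrix.mul_apply, Matrix.one_apply]
    simpa [hVdef, genVandermonde, PbM, Pi.single_apply] using eq_b r k
  have hVPa : V * PaM = -(Matrix.diagonal c) := by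
    ext r k
    have h := eq_a r k
    have h1 : (V * PaM) r k = ∑ q, (x.1 r ^ m q) *
        pa (fun y => laurentCoeff m y q) k x := by
      simp [Matrix.mul_apply, hVdef, genVandermonde, PaM]
    rw [h1]
    have hsingle : (Pi.single k 1 : Fin n → ℝ) r = if r = k then 1 else 0 := by
      simp [Pi.single_apply]
    rw [hsingle] at h
    have h2 : (-(Matrix.diagonal c)) r k = -((if r = k then 1 else 0) * c r) := by
      by_cases hrk : r = k
      · subst hrk; simp [Matrix.diagonal_apply_eq]
      · simp [Matrix.diagonal_apply_ne _ hrk, hrk]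
    rw [h2, hc] at *
    linarith [h]
  have hPbW : PbM = W := by
    rw [hWdef, Matrix.inv_eq_right_inv hVPb]
  have hPaW : PaM = -(W * Matrix.diagonal c) := by
    calc PaM = (W * V) * PaM := by
          rw [hWdef, Matrix.nonsing_inv_mul V hdet, Matrix.one_mul]
      _ = W * (V * PaM) := Matrix.mul_assoc _ _ _
      _ = W * -(Matrix.diagonal c) := by rw [hVPa]
      _ = -(W * Matrix.diagonal c) := mul_neg _ _
  have hpaval : ∀ p k, pa (fun y => laurentCoeff m y p) k x = -(W p k * c k) := by
    intro p k
    have h1 : PaM p k = (-(W * Matrix.diagonal c)) p k := by rw [hPaW]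
    simpa [PaM, Matrix.neg_apply, Matrix.mul_diagonal] using h1
  have hpbval : ∀ p k, pb (fun y => laurentCoeff m y p) k x = W p k := by
    intro p k
    have h1 : PbM p k = W p k := by rw [hPbW]
    simpa [PbM] using h1
  refine Finset.sum_eq_zero fun k _ => ?_
  rw [hpaval i k, hpbval j k, hpaval j k, hpbval i k]
  ring
end

section
/- Let F : ℝⁿ × ℝ² → ℝ per index, i.e. F₁,…,Fₙ C¹ functions with Fᵢ depending on (H,aᵢ,bᵢ), and H : U → ℝⁿ a C¹ solution of Fᵢ(H(a,b),aᵢ,bᵢ) = 0 on an open U ⊆ ℝ²ⁿ. Fix k and suppose at a point of U there is j_k with the (n−1)×(n−1) matrix (∂Fᵢ/∂Hⱼ)_{i≠k, j≠j_k} invertible. Then there exist scalars A_j (j = 1,…,n, with A_{j_k} = 1) such that ∂Hⱼ/∂aₖ = A_j · ∂H_{j_k}/∂aₖ and ∂Hⱼ/∂bₖ = A_j · ∂H_{j_k}/∂bₖ for all j at that point. -/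
theorem stmt18 {n : ℕ} (F : Fin n → (Fin n → ℝ) × ℝ × ℝ → ℝ)
    (hF : ∀ i, ContDiff ℝ 1 (F i))
    (U : Set ((Fin n → ℝ) × (Fin n → ℝ))) (hU : IsOpen U)
    (H : (Fin n → ℝ) × (Fin n → ℝ) → (Fin n → ℝ)) (hH : ContDiff ℝ 1 H)
    (heq : ∀ i, ∀ x ∈ U, F i (H x, x.1 i, x.2 i) = 0)
    (k : Fin n) (x : (Fin n → ℝ) × (Fin n → ℝ)) (hx : x ∈ U) (jk : Fin n)
    (hinv : Function.Bijective
      (Matrix.mulVecLin (Matrix.of fun (i : {i : Fin n // i ≠ k}) (j : {j : Fin n // j ≠ jk}) =>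
        fderiv ℝ (F i.1) (H x, x.1 i.1, x.2 i.1) (Pi.single j.1 1, 0, 0)))) :
    ∃ A : Fin n → ℝ, A jk = 1 ∧ ∀ j : Fin n,
      pa (fun y => H y j) k x = A j * pa (fun y => H y jk) k x ∧
      pb (fun y => H y j) k x = A j * pb (fun y => H y jk) k x := by
  classical
  set D : Fin n → Fin n → ℝ := fun i j =>
    fderiv ℝ (F i) (H x, x.1 i, x.2 i) (Pi.single j 1, 0, 0) with hD
  replace hinv : Function.Bijective
      (Matrix.mulVecLin (Matrix.of fun (i : {i : Fin n // i ≠ k}) (j : {j : Fin n // j ≠ jk}) =>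
        D i.1 j.1)) := hinv
  have hHdiff : Differentiable ℝ H := hH.differentiable one_ne_zero
  -- evaluation of component derivative
  have heval : ∀ (j : Fin n) (d : (Fin n → ℝ) × (Fin n → ℝ)),
      fderiv ℝ (fun y => H y j) x d = fderiv ℝ H x d j := by
    intro j d
    have h1 : HasFDerivAt H (fderiv ℝ H x) x := (hHdiff x).hasFDerivAt
    have h2 := ((ContinuousLinearMap.proj j : (Fin n → ℝ) →L[ℝ] ℝ).hasFDerivAt.comp x h1).fderiv
    have h3 : (fun y => H y j)
        = (⇑(ContinuousLinearMap.proj j (R := ℝ) (φ := fun _ : Fin n => ℝ))) ∘ H := rfl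
    rw [h3, h2]; rfl
  -- linear expansion
  have hexp : ∀ (L : ((Fin n → ℝ) × ℝ × ℝ) →L[ℝ] ℝ) (v : Fin n → ℝ),
      L (v, 0, 0) = ∑ j, v j * L (Pi.single j 1, 0, 0) := by
    intro L v
    have h1 : ((v, (0:ℝ), (0:ℝ)) : (Fin n → ℝ) × ℝ × ℝ)
        = ∑ j, v j • ((Pi.single j 1 : Fin n → ℝ), (0:ℝ), (0:ℝ)) := by
      have hs : (∑ j, v j • (((Pi.single j 1 : Fin n → ℝ), (0:ℝ), (0:ℝ)) : (Fin n → ℝ) × ℝ × ℝ))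
          = (∑ j, v j • (Pi.single j 1 : Fin n → ℝ), ∑ j, v j • (((0:ℝ), (0:ℝ)) : ℝ × ℝ)) := by
        rw [Prod.ext_iff]
        exact ⟨by simp [Prod.fst_sum], by simp [Prod.snd_sum]⟩
      rw [hs]
      have h2 : ∑ j, v j • (Pi.single j 1 : Fin n → ℝ) = v := by
        have hsingle : ∀ j : Fin n, v j • (Pi.single j 1 : Fin n → ℝ) = Pi.single j (v j) := by
          intro j; simp [← Pi.single_smul]
        simp_rw [hsingle]
        exact Finset.univ_sum_single v
      rw [h2]; simp
    rw [h1, map_sum]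
    simp only [map_smul, smul_eq_mul]
  -- chain rule: derivative of the constraint vanishes for directions not touching (a_i, b_i)
  have hzero : ∀ i : Fin n, i ≠ k → ∀ d : (Fin n → ℝ) × (Fin n → ℝ),
      d.1 i = 0 → d.2 i = 0 → ∑ j, D i j * fderiv ℝ H x d j = 0 := by
    intro i hik d hd1 hd2
    set L2 : ((Fin n → ℝ) × (Fin n → ℝ)) →L[ℝ] ℝ × ℝ :=
      ((ContinuousLinearMap.proj i).comp (ContinuousLinearMap.fst ℝ _ _)).prod
        ((ContinuousLinearMap.proj i).comp (ContinuousLinearMap.snd ℝ _ _)) with hL2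
    have hφ : HasFDerivAt (fun y : (Fin n → ℝ) × (Fin n → ℝ) => (H y, y.1 i, y.2 i))
        ((fderiv ℝ H x).prod L2) x :=
      HasFDerivAt.prodMk (hHdiff x).hasFDerivAt L2.hasFDerivAt
    have hFi : HasFDerivAt (F i) (fderiv ℝ (F i) (H x, x.1 i, x.2 i)) (H x, x.1 i, x.2 i) :=
      (((hF i).differentiable one_ne_zero) _).hasFDerivAt
    have hg : HasFDerivAt (fun y => F i (H y, y.1 i, y.2 i))
        ((fderiv ℝ (F i) (H x, x.1 i, x.2 i)).comp ((fderiv ℝ H x).prod L2)) x := hFi.comp x hφ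
    have hloc : (fun y => F i (H y, y.1 i, y.2 i)) =ᶠ[nhds x] fun _ => (0:ℝ) := by
      filter_upwards [hU.mem_nhds hx] with y hy using heq i y hy
    have hzero' : fderiv ℝ (fun y => F i (H y, y.1 i, y.2 i)) x = 0 := by
      rw [hloc.fderiv_eq]; exact fderiv_const_apply 0
    have hcomp : (fderiv ℝ (F i) (H x, x.1 i, x.2 i)).comp ((fderiv ℝ H x).prod L2) = 0 := by
      rw [← hg.fderiv, hzero']
    have happ := congrArg (fun L : ((Fin n → ℝ) × (Fin n → ℝ)) →L[ℝ] ℝ => L d) hcomp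
    simp only [ContinuousLinearMap.comp_apply, ContinuousLinearMap.zero_apply,
      ContinuousLinearMap.prod_apply] at happ
    have hL2d : L2 d = (d.1 i, d.2 i) := rfl
    rw [hL2d, hd1, hd2] at happ
    have hfin : ∑ j, fderiv ℝ H x d j * D i j = 0 := by
      simp only [hD]
      exact (hexp (fderiv ℝ (F i) (H x, x.1 i, x.2 i)) (fderiv ℝ H x d)).symm.trans happ
    calc ∑ j, D i j * fderiv ℝ H x d j = ∑ j, fderiv ℝ H x d j * D i j := by
          exact Finset.sum_congr rfl fun j _ => mul_comm _ _
      _ = 0 := hfin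
  -- the two special directions
  have hza : ∀ i, i ≠ k → ∑ j, D i j * fderiv ℝ H x (Pi.single k 1, 0) j = 0 := fun i hik =>
    hzero i hik (Pi.single k 1, 0) (Pi.single_eq_of_ne hik 1) rfl
  have hzb : ∀ i, i ≠ k → ∑ j, D i j * fderiv ℝ H x (0, Pi.single k 1) j = 0 := fun i hik =>
    hzero i hik (0, Pi.single k 1) rfl (Pi.single_eq_of_ne hik 1)
  -- solve the linear system
  obtain ⟨w, hw⟩ := hinv.2 (fun i : {i : Fin n // i ≠ k} => - D i.1 jk)
  have key : ∀ uu : Fin n → ℝ, (∀ i, i ≠ k → ∑ j, D i j * uu j = 0) →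
      ∀ j (hj : j ≠ jk), uu j = uu jk * w ⟨j, hj⟩ := by
    intro uu huu
    have h1 : (Matrix.of fun (i : {i : Fin n // i ≠ k}) (j : {j : Fin n // j ≠ jk}) =>
          D i.1 j.1).mulVecLin (fun j => uu j.1)
        = (Matrix.of fun (i : {i : Fin n // i ≠ k}) (j : {j : Fin n // j ≠ jk}) =>
          D i.1 j.1).mulVecLin (uu jk • w) := by
      rw [map_smul, hw]
      funext i
      simp only [Matrix.mulVecLin_apply, Matrix.mulVec, dotProduct, Matrix.of_apply,
        Pi.smul_apply, smul_eq_mul]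
      have hsplit := Fintype.sum_eq_add_sum_compl jk (fun j => D i.1 j * uu j)
      have hsub : ∑ j ∈ ({jk}ᶜ : Finset (Fin n)), D i.1 j * uu j
          = ∑ j : {j : Fin n // j ≠ jk}, D i.1 j.1 * uu j.1 :=
        Finset.sum_subtype _ (fun j => by simp) _
      have h0 := huu i.1 i.2
      rw [hsplit, hsub] at h0
      linarith [h0]
    have h2 := hinv.1 h1
    intro j hj
    have h3 := congrFun h2 ⟨j, hj⟩
    simpa [smul_eq_mul, mul_comm] using h3
  -- assemble
  refine ⟨fun j => if h : j = jk then 1 else w ⟨j, h⟩, by simp, fun j => ⟨?_, ?_⟩⟩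
  · show fderiv ℝ (fun y => H y j) x (Pi.single k 1, 0)
      = _ * fderiv ℝ (fun y => H y jk) x (Pi.single k 1, 0)
    rw [heval, heval]
    by_cases h : j = jk
    · subst h; simp
    · have := key (fun j => fderiv ℝ H x (Pi.single k 1, 0) j) hza j h
      rw [this]
      simp [h, mul_comm]
  · show fderiv ℝ (fun y => H y j) x (0, Pi.single k 1)
      = _ * fderiv ℝ (fun y => H y jk) x (0, Pi.single k 1)
    rw [heval, heval]
    by_cases h : j = jk
    · subst h; simp
    · have := key (fun j => fderiv ℝ H x (0, Pi.single k 1) j) hzb j h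
      rw [this]
      simp [h, mul_comm]
end
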